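/- Let v ∈ ℂⁿ with A·v = β, and suppose G = Σ λ_{ν} x^{ν} is a formal logarithm-free series solution of H_A(β) (supported on v + ker_ℤ(A)). If x^{ν} appears in G with λ_{ν} ≠ 0, then ν has minimal negative support: there is no u ∈ ker_ℤ(A) with nsup(ν+u) strictly contained in nsup(ν), where nsup(w) = {i : w_i ∈ ℤ_{<0}}. -/

import Mathlib

open scoped Classical

/-- The "falling factorial" scalar `∂^a x^s = fallP s a · x^{s-a}`:
`fallP s a = ∏ⱼ ∏_{l=0}^{aⱼ-1} (sⱼ - l)`. -/
noncomputable def fallP {n : ℕ} (s : Fin n → ℂ) (a : Fin n → ℕ) : ℂ :=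
  ∏ j, ∏ l ∈ Finset.range (a j), (s j - l)

/-- The positive part `u₊` of `u ∈ ℤⁿ`, as an integer vector. -/
def uposZ {n : ℕ} (u : Fin n → ℤ) : Fin n → ℤ := fun j => max (u j) 0

/-- The negative part `u₋` of `u ∈ ℤⁿ`, as an integer vector. -/
def unegZ {n : ℕ} (u : Fin n → ℤ) : Fin n → ℤ := fun j => max (-u j) 0

/-- The positive part `u₊` of `u ∈ ℤⁿ`, as a natural-number vector. -/
def uposN {n : ℕ} (u : Fin n → ℤ) : Fin n → ℕ := fun j => (u j).toNat

/-- The negative part `u₋` of `u ∈ ℤⁿ`, as a natural-number vector. -/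
def unegN {n : ℕ} (u : Fin n → ℤ) : Fin n → ℕ := fun j => (-u j).toNat

/-- The coefficient `[v]_{u₋}/[u+v]_{u₊}` of `x^{v+u}` in the series `φ_v`, where
`[v]_{u₋} = ∏_{uᵢ<0} ∏_{j=1}^{-uᵢ} (vᵢ - j + 1)` and
`[u+v]_{u₊} = ∏_{uᵢ>0} ∏_{j=1}^{uᵢ} (vᵢ + j)`. -/
noncomputable def hypCoeff {n : ℕ} (v : Fin n → ℂ) (u : Fin n → ℤ) : ℂ :=
  (∏ j, ∏ l ∈ Finset.range (unegN u j), (v j - l)) /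
  (∏ j, ∏ l ∈ Finset.range (uposN u j), (v j + (l + 1)))

/-- The negative support of a vector: the set of indices at which it is a negative
integer. -/
def nsup {n : ℕ} (s : Fin n → ℂ) : Set (Fin n) := {i | ∃ k : ℤ, k < 0 ∧ s i = (k : ℂ)}

/-- If `G = Σ λ_{v+u} x^{v+u}` is a formal logarithm-free series solution of `H_A(β)`
supported on `v + ker_ℤ(A)` (given by its coefficient function `lam`, with the toric
equations expressed by coefficient matching), then every exponent `v+u` appearing in
`G` with nonzero coefficient has minimal negative support. -/
theorem stmt14 (d n : ℕ) (A : Matrix (Fin d) (Fin n) ℤ) (β : Fin d → ℂ) (v : Fin n → ℂ)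
    (hAv : ∀ i, ∑ j, (A i j : ℂ) * v j = β i)
    (lam : (Fin n → ℤ) → ℂ)
    (hsupp : ∀ u, lam u ≠ 0 → A.mulVec u = 0)
    (htoric : ∀ u : Fin n → ℤ, A.mulVec u = 0 → ∀ w : Fin n → ℤ,
      lam (w + uposZ u) * fallP (fun j => v j + ((w j + uposZ u j : ℤ) : ℂ)) (uposN u)
        = lam (w + unegZ u) *
            fallP (fun j => v j + ((w j + unegZ u j : ℤ) : ℂ)) (unegN u)) :
    ∀ u : Fin n → ℤ, lam u ≠ 0 →
      ¬ ∃ u' : Fin n → ℤ, A.mulVec u' = 0 ∧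
        nsup (fun j => v j + ((u j + u' j : ℤ) : ℂ))
          ⊂ nsup (fun j => v j + ((u j : ℤ) : ℂ)) := by
  rintro u hlam ⟨u', hAu', hss⟩
  have key := htoric u' hAu' (u - unegZ u')
  have e1 : ∀ j, (u - unegZ u') j + uposZ u' j = u j + u' j := by
    intro j; simp [uposZ, unegZ]; omega
  have e2 : ∀ j, (u - unegZ u') j + unegZ u' j = u j := by
    intro j; simp only [Pi.sub_apply, unegZ]; omega
  have e1' : (u - unegZ u') + uposZ u' = u + u' := funext e1
  have e2' : (u - unegZ u') + unegZ u' = u := funext e2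
  simp only [e1, e2, e1', e2'] at key
  -- key : lam (u+u') * fallP (ν+u') (uposN u') = lam u * fallP ν (unegN u')
  obtain ⟨i, hi, hni⟩ := Set.not_subset.mp hss.2
  obtain ⟨k, hk, hkeq⟩ := hi
  have hkeq : v i + ((u i : ℤ) : ℂ) = (k : ℂ) := hkeq
  -- the unegN-side falling factorial is nonzero
  have hne : fallP (fun j => v j + ((u j : ℤ) : ℂ)) (unegN u') ≠ 0 := by
    unfold fallP
    rw [Finset.prod_ne_zero_iff]
    intro j _
    rw [Finset.prod_ne_zero_iff]
    intro l hl h0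
    rw [Finset.mem_range] at hl
    have hvl : v j + ((u j : ℤ) : ℂ) = (l : ℂ) := by
      have h0' : (v j + ((u j : ℤ) : ℂ)) - (l : ℂ) = 0 := h0
      linear_combination h0'
    have hlu : (l : ℤ) + u' j < 0 := by
      unfold unegN at hl; omega
    have hj : j ∈ nsup (fun j => v j + ((u j + u' j : ℤ) : ℂ)) := by
      refine ⟨(l : ℤ) + u' j, hlu, ?_⟩
      show v j + ((u j + u' j : ℤ) : ℂ) = (((l : ℤ) + u' j : ℤ) : ℂ)
      push_cast
      push_cast at hvl
      linear_combination hvl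
    obtain ⟨m, hm, hmeq⟩ := hss.1 hj
    have hmeq : v j + ((u j : ℤ) : ℂ) = (m : ℂ) := hmeq
    have hlm : ((l : ℤ) : ℂ) = ((m : ℤ) : ℂ) := by
      push_cast at hvl ⊢
      linear_combination hmeq - hvl
    have : (l : ℤ) = m := by exact_mod_cast hlm
    omega
  -- the uposN-side falling factorial vanishes at the witness i
  have hge : 0 ≤ k + u' i := by
    by_contra h
    push_neg at h
    refine hni ⟨k + u' i, h, ?_⟩
    show v i + ((u i + u' i : ℤ) : ℂ) = ((k + u' i : ℤ) : ℂ)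
    push_cast
    push_cast at hkeq
    linear_combination hkeq
  have hz : fallP (fun j => v j + ((u j + u' j : ℤ) : ℂ)) (uposN u') = 0 := by
    unfold fallP
    apply Finset.prod_eq_zero (Finset.mem_univ i)
    have hmem : (k + u' i).toNat ∈ Finset.range (uposN u' i) := by
      rw [Finset.mem_range]; unfold uposN; omega
    apply Finset.prod_eq_zero hmem
    show (v i + ((u i + u' i : ℤ) : ℂ)) - (((k + u' i).toNat : ℕ) : ℂ) = 0
    have ht : (((k + u' i).toNat : ℕ) : ℂ) = ((k + u' i : ℤ) : ℂ) := by
      rw [← Int.cast_natCast, Int.toNat_of_nonneg hge]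
    rw [ht]
    push_cast
    push_cast at hkeq
    linear_combination hkeq
  rw [hz, mul_zero] at key
  rcases mul_eq_zero.mp key.symm with h | h
  · exact hlam h
  · exact absurd h hne
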